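/- If x ∈ ℝⁿ satisfies 0 ≤ x entrywise and eᵀx ≤ 1, then the matrix F'ₓ = I − αR(x ⊗ I + I ⊗ x) is invertible and its inverse has all entries nonnegative (i.e., F'ₓ is a nonsingular M-matrix). -/

import Mathlib

open Matrix BigOperators Finset Filter
open scoped NNReal

noncomputable section

attribute [local instance] Matrix.linftyOpNormedRing Matrix.linftyOpNormedAlgebra

lemma entry_bound {n : ℕ} (A : Matrix (Fin n) (Fin n) ℝ) (i j : Fin n) : ‖A i j‖ ≤ ‖A‖ := by
  rw [Matrix.linfty_opNorm_def]
  calc ‖A i j‖ ≤ ∑ k, ‖A i k‖ := Finset.single_le_sum (fun k _ => norm_nonneg _) (Finset.mem_univ j)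
    _ ≤ _ := by
        have : (∑ k, ‖A i k‖₊ : ℝ≥0) ≤ (Finset.univ.sup fun i : Fin n => ∑ j, ‖A i j‖₊) :=
          Finset.le_sup (f := fun i : Fin n => ∑ j, ‖A i j‖₊) (Finset.mem_univ i)
        calc (∑ k, ‖A i k‖) = ((∑ k, ‖A i k‖₊ : ℝ≥0) : ℝ) := by push_cast; rfl
          _ ≤ _ := by exact_mod_cast this

lemma one_sub_inv_nonneg {n : ℕ} (A : Matrix (Fin n) (Fin n) ℝ)
    (h0 : ∀ i j, 0 ≤ A i j) (hA : ‖A‖ < 1) :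
    IsUnit (1 - A) ∧ ∀ i j, 0 ≤ (1 - A)⁻¹ i j := by
  have hsum : Summable (fun k : ℕ => A ^ k) := summable_geometric_of_norm_lt_one hA
  have hpow : ∀ (k : ℕ) i j, 0 ≤ (A ^ k) i j := by
    intro k
    induction k with
    | zero =>
        intro i j
        by_cases h : i = j <;> simp [pow_zero, Matrix.one_apply, h]
    | succ k ih =>
        intro i j
        rw [pow_succ, Matrix.mul_apply]
        exact Finset.sum_nonneg fun l _ => mul_nonneg (ih i l) (h0 l j)
  refine ⟨isUnit_one_sub_of_norm_lt_one hA, fun i j => ?_⟩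
  rw [Matrix.nonsing_inv_eq_ringInverse, ← geom_series_eq_inverse A hA]
  let f : Matrix (Fin n) (Fin n) ℝ →L[ℝ] ℝ :=
    LinearMap.mkContinuous
      { toFun := fun M : Matrix (Fin n) (Fin n) ℝ => M i j
        map_add' := fun _ _ => rfl
        map_smul' := fun _ _ => rfl } 1
      (fun M => by rw [one_mul]; exact entry_bound M i j)
  have hf : (∑' k : ℕ, A ^ k) i j = ∑' k : ℕ, (A ^ k) i j := f.map_tsum hsum
  show 0 ≤ (∑' k : ℕ, A ^ k) i j
  rw [hf]
  exact tsum_nonneg fun k => hpow k i j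

/-- Kronecker product of two vectors: `(u ⊗ w)_{(i,j)} = u_i w_j`. -/
def kron {n : ℕ} (u w : Fin n → ℝ) : Fin n × Fin n → ℝ := fun p => u p.1 * w p.2

/-- `u ⊗ I` : the `n² × n` Kronecker product of a vector with the identity,
so that `(u ⊗ I) w = u ⊗ w`. -/
def kronVecId {n : ℕ} (u : Fin n → ℝ) : Matrix (Fin n × Fin n) (Fin n) ℝ :=
  Matrix.of fun p k => u p.1 * (if p.2 = k then (1 : ℝ) else 0)

/-- `I ⊗ u` : the `n² × n` Kronecker product of the identity with a vector,
so that `(I ⊗ u) w = w ⊗ u`. -/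
def idKronVec {n : ℕ} (u : Fin n → ℝ) : Matrix (Fin n × Fin n) (Fin n) ℝ :=
  Matrix.of fun p k => (if p.1 = k then (1 : ℝ) else 0) * u p.2

/-- `F(x) = x − α R (x ⊗ x) − (1 − α) v`. -/
def Fmap {n : ℕ} (α : ℝ) (R : Matrix (Fin n) (Fin n × Fin n) ℝ) (v : Fin n → ℝ)
    (x : Fin n → ℝ) : Fin n → ℝ :=
  x - α • R.mulVec (kron x x) - (1 - α) • v

/-- `F'ₓ = I − α R (x ⊗ I + I ⊗ x)`. -/
def Fprime {n : ℕ} (α : ℝ) (R : Matrix (Fin n) (Fin n × Fin n) ℝ)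
    (x : Fin n → ℝ) : Matrix (Fin n) (Fin n) ℝ :=
  1 - α • (R * (kronVecId x + idKronVec x))

theorem stmt0 {n : ℕ} (hn : 1 ≤ n) (α : ℝ) (hα0 : 0 < α) (hα : α < 1 / 2)
    (R : Matrix (Fin n) (Fin n × Fin n) ℝ) (hR0 : ∀ i p, 0 ≤ R i p)
    (hRcol : ∀ p, ∑ i, R i p = 1)
    (v : Fin n → ℝ) (hv0 : 0 ≤ v) (hv1 : ∑ i, v i = 1)
    (x : Fin n → ℝ) (hx0 : 0 ≤ x) (hx1 : ∑ i, x i ≤ 1) :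
    IsUnit (Fprime α R x) ∧ ∀ i j, 0 ≤ (Fprime α R x)⁻¹ i j := by
  set B : Matrix (Fin n) (Fin n) ℝ := α • (R * (kronVecId x + idKronVec x)) with hBdef
  have hM0 : ∀ p j, 0 ≤ (kronVecId x + idKronVec x) p j := by
    intro p j
    have h1 : 0 ≤ x p.1 := hx0 p.1
    have h2 : 0 ≤ x p.2 := hx0 p.2
    simp only [Matrix.add_apply, kronVecId, idKronVec, Matrix.of_apply]
    positivity
  have hB0 : ∀ i j, 0 ≤ B i j := by
    intro i j
    simp only [hBdef, Matrix.smul_apply, Matrix.mul_apply, smul_eq_mul]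
    exact mul_nonneg hα0.le (Finset.sum_nonneg fun p _ => mul_nonneg (hR0 i p) (hM0 p _))
  have hcol : ∀ j, ∑ i, B i j ≤ 2 * α := by
    intro j
    have hswap : ∑ i, B i j = α * ∑ p, (kronVecId x + idKronVec x) p j := by
      simp only [hBdef, Matrix.smul_apply, Matrix.mul_apply, smul_eq_mul]
      rw [← Finset.mul_sum, Finset.sum_comm]
      congr 1
      refine Finset.sum_congr rfl fun p _ => ?_
      rw [← Finset.sum_mul, hRcol p, one_mul]
    have hMsum : ∑ p, (kronVecId x + idKronVec x) p j = 2 * ∑ i, x i := by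
      simp only [Matrix.add_apply, kronVecId, idKronVec, Matrix.of_apply]
      rw [Fintype.sum_prod_type]
      simp only [Finset.sum_add_distrib, mul_ite, mul_one, mul_zero, ite_mul, one_mul, zero_mul]
      rw [Finset.sum_comm (f := fun a b => if a = j then x b else 0)]
      simp [Finset.sum_ite_eq', two_mul, Finset.mul_sum]
      rw [← Finset.sum_add_distrib]
    rw [hswap, hMsum]
    nlinarith [hα0.le]
  have hnorm : ‖Bᵀ‖ < 1 := by
    rw [Matrix.linfty_opNorm_def]
    rw [show (1 : ℝ) = ((1 : ℝ≥0) : ℝ) from rfl, NNReal.coe_lt_coe]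
    rw [Finset.sup_lt_iff (by norm_num : (⊥ : ℝ≥0) < 1)]
    intro j _
    rw [← NNReal.coe_lt_coe]
    push_cast
    have : ∀ i, ‖Bᵀ j i‖ = B i j := fun i => by
      rw [Matrix.transpose_apply, Real.norm_of_nonneg (hB0 i j)]
    calc ∑ i, ‖Bᵀ j i‖ = ∑ i, B i j := Finset.sum_congr rfl fun i _ => this i
      _ ≤ 2 * α := hcol j
      _ < 1 := by linarith
  have hBt0 : ∀ i j, 0 ≤ Bᵀ i j := fun i j => hB0 j i
  obtain ⟨hu, hinv⟩ := one_sub_inv_nonneg Bᵀ hBt0 hnorm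
  have hFp : Fprime α R x = (1 - Bᵀ)ᵀ := by
    simp [Fprime, hBdef, Matrix.transpose_sub, Matrix.transpose_one]
  constructor
  · rw [hFp, Matrix.isUnit_iff_isUnit_det, Matrix.det_transpose,
      ← Matrix.isUnit_iff_isUnit_det]
    exact hu
  · intro i j
    rw [hFp, ← Matrix.transpose_nonsing_inv, Matrix.transpose_apply]
    exact hinv j i
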